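/- arXiv:1612.09104 — 2 statements merged into one kernel-verified Lean document; each statement's English description precedes it below -/
import Mathlib

section
/- Let A be a finite abelian group, σ, ρ ∈ A, d = |⟨σ⟩ ∩ ⟨ρ⟩|, and h ∈ (ℤ/dℤ)× defined by ρ^{o(ρ)/d} = (σ^{o(σ)/d})^h. Then for integers 0 ≤ u < o(σ) and 0 ≤ v < o(ρ), there exists a character χ of A with u_{χ,σ} = u and u_{χ,ρ} = v if and only if v ≡ hu (mod d); and when this congruence holds, the number of such characters is |A|·d/(o(σ)·o(ρ)). -/
noncomputable def ee (x : ℝ) : ℂ := Complex.exp (2 * Real.pi * Complex.I * x)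

lemma ee_ne_zero (x : ℝ) : ee x ≠ 0 := Complex.exp_ne_zero _

lemma two_pi_I_ne_zero : (2 * (Real.pi : ℂ) * Complex.I) ≠ 0 :=
  mul_ne_zero (mul_ne_zero two_ne_zero (Complex.ofReal_ne_zero.mpr Real.pi_ne_zero))
    Complex.I_ne_zero

lemma ee_eq_ee_iff {x y : ℝ} : ee x = ee y ↔ ∃ m : ℤ, x = y + m := by
  rw [ee, ee, Complex.exp_eq_exp_iff_exists_int]
  constructor
  · rintro ⟨m, hm⟩
    refine ⟨m, ?_⟩
    have hm' : (2 * (Real.pi : ℂ) * Complex.I) * x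
        = (2 * (Real.pi : ℂ) * Complex.I) * ((y : ℂ) + m) := by
      rw [hm]; ring
    have := mul_left_cancel₀ two_pi_I_ne_zero hm'
    exact_mod_cast this
  · rintro ⟨m, hm⟩
    refine ⟨m, ?_⟩
    have : ((x : ℝ) : ℂ) = ((y : ℝ) : ℂ) + (m : ℂ) := by exact_mod_cast congrArg Complex.ofReal hm
    rw [this]; ring

lemma ee_pow (x : ℝ) (k : ℕ) : ee x ^ k = ee (k * x) := by
  rw [ee, ee, ← Complex.exp_nat_mul]
  congr 1
  push_cast
  ring

lemma ee_nat_inj {n a b : ℕ} (ha : a < n) (hb : b < n)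
    (h : ee ((a : ℝ) / n) = ee ((b : ℝ) / n)) : a = b := by
  have hn : 0 < n := lt_of_le_of_lt (Nat.zero_le a) ha
  obtain ⟨m, hm⟩ := ee_eq_ee_iff.mp h
  have hn' : (n : ℝ) ≠ 0 := Nat.cast_ne_zero.mpr hn.ne'
  have hr : (a : ℝ) = b + m * n := by
    field_simp at hm
    linarith
  have hz : (a : ℤ) = b + m * n := by exact_mod_cast hr
  have hmod : a ≡ b [MOD n] := (Nat.modEq_iff_dvd).mpr ⟨-m, by linarith⟩
  rwa [Nat.ModEq, Nat.mod_eq_of_lt ha, Nat.mod_eq_of_lt hb] at hmod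

lemma units_param {n : ℕ} (hn : 0 < n) (z : ℂˣ) (hz : z ^ n = 1) :
    ∃ i < n, (z : ℂ) = ee ((i : ℝ) / n) := by
  haveI : NeZero n := ⟨hn.ne'⟩
  have hmem : z ∈ rootsOfUnity n ℂ := by
    rw [mem_rootsOfUnity]; exact hz
  obtain ⟨i, hi, hiz⟩ := (Complex.mem_rootsOfUnity n z).mp hmem
  refine ⟨i, hi, ?_⟩
  rw [← hiz, ee]
  congr 1
  push_cast
  ring

lemma ee_compat {n1 n2 d h u v : ℕ} (hd1 : d ∣ n1) (hd2 : d ∣ n2) (hdpos : 0 < d)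
    (hn1 : 0 < n1) (hn2 : 0 < n2)
    (heq : ee ((v : ℝ) / n2) ^ (n2 / d) = (ee ((u : ℝ) / n1) ^ (n1 / d)) ^ h) :
    v ≡ h * u [MOD d] := by
  have hd0 : (d : ℝ) ≠ 0 := Nat.cast_ne_zero.mpr hdpos.ne'
  have hn10 : (n1 : ℝ) ≠ 0 := Nat.cast_ne_zero.mpr hn1.ne'
  have hn20 : (n2 : ℝ) ≠ 0 := Nat.cast_ne_zero.mpr hn2.ne'
  rw [ee_pow, ee_pow, ee_pow] at heq
  have e2 : ((n2 / d : ℕ) : ℝ) * ((v : ℝ) / n2) = (v : ℝ) / d := by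
    rw [Nat.cast_div hd2 hd0]
    field_simp
  have e1 : (h : ℝ) * (((n1 / d : ℕ) : ℝ) * ((u : ℝ) / n1)) = ((h : ℝ) * u) / d := by
    rw [Nat.cast_div hd1 hd0]
    field_simp
  rw [e1, e2] at heq
  obtain ⟨m, hm⟩ := ee_eq_ee_iff.mp heq
  have hr : (v : ℝ) = h * u + m * d := by
    field_simp at hm
    linarith
  refine (Nat.modEq_iff_dvd).mpr ⟨-m, ?_⟩
  have hz : (v : ℤ) = h * u + m * d := by exact_mod_cast hr
  push_cast
  linarith

theorem characters_with_two_values {A : Type*} [CommGroup A] [Fintype A] (σ ρ : A)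
    (d : ℕ) (hd : d = Nat.card ↥(Subgroup.zpowers σ ⊓ Subgroup.zpowers ρ))
    (h : ℕ) (hh : ρ ^ (orderOf ρ / d) = (σ ^ (orderOf σ / d)) ^ h)
    (u v : ℕ) (hu : u < orderOf σ) (hv : v < orderOf ρ) :
    ((∃ χ : A →* ℂˣ, (χ σ : ℂ) = ee ((u : ℝ) / orderOf σ) ∧
        (χ ρ : ℂ) = ee ((v : ℝ) / orderOf ρ)) ↔ v ≡ h * u [MOD d]) ∧
    (v ≡ h * u [MOD d] →
      Nat.card {χ : A →* ℂˣ // (χ σ : ℂ) = ee ((u : ℝ) / orderOf σ) ∧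
          (χ ρ : ℂ) = ee ((v : ℝ) / orderOf ρ)}
        = Fintype.card A * d / (orderOf σ * orderOf ρ)) := by
  classical
  set n1 := orderOf σ with hn1def
  set n2 := orderOf ρ with hn2def
  have hn1 : 0 < n1 := orderOf_pos σ
  have hn2 : 0 < n2 := orderOf_pos ρ
  set Hσ := Subgroup.zpowers σ with hHσdef
  set Hρ := Subgroup.zpowers ρ with hHρdef
  set K := Hσ ⊓ Hρ with hKdef
  set H := Hσ ⊔ Hρ with hHdef
  have hdpos : 0 < d := by rw [hd]; exact Nat.card_pos
  have hd1 : d ∣ n1 := by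
    have h1 : Nat.card K ∣ Nat.card Hσ := Subgroup.card_dvd_of_le inf_le_left
    rwa [← hd, Nat.card_zpowers] at h1
  have hd2 : d ∣ n2 := by
    have h1 : Nat.card K ∣ Nat.card Hρ := Subgroup.card_dvd_of_le inf_le_right
    rwa [← hd, Nat.card_zpowers] at h1
  -- product formula
  have hprod : Nat.card H * d = n1 * n2 := by
    have hA : Hρ.relIndex H * Nat.card Hρ = Nat.card H := by
      have h1 := Subgroup.index_mul_card (Hρ.subgroupOf H)
      rwa [Nat.card_congr (Subgroup.subgroupOfEquivOfLe (le_sup_right : Hρ ≤ H)).toEquiv,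
        ← Subgroup.relIndex] at h1
    have hB : K.relIndex Hσ * Nat.card K = Nat.card Hσ := by
      have h1 := Subgroup.index_mul_card (K.subgroupOf Hσ)
      rwa [Nat.card_congr (Subgroup.subgroupOfEquivOfLe (inf_le_left : K ≤ Hσ)).toEquiv,
        ← Subgroup.relIndex] at h1
    have hrel : Hρ.relIndex H = K.relIndex Hσ := by
      rw [hHdef, Subgroup.relIndex_sup_right, ← Subgroup.inf_relIndex_right Hρ Hσ, hKdef,
        inf_comm]
    calc Nat.card H * d = (Hρ.relIndex H * Nat.card Hρ) * Nat.card K := by rw [hA, hd]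
      _ = (K.relIndex Hσ * Nat.card K) * Nat.card Hρ := by rw [hrel]; ring
      _ = Nat.card Hσ * Nat.card Hρ := by rw [hB]
      _ = n1 * n2 := by rw [Nat.card_zpowers, Nat.card_zpowers]
  -- duality for A
  haveI : NeZero ((Monoid.exponent A : ℕ) : ℂ) :=
    ⟨by exact_mod_cast Monoid.exponent_ne_zero_of_finite⟩
  obtain ⟨e0⟩ := CommGroup.monoidHom_mulEquiv_of_hasEnoughRootsOfUnity A ℂ
  haveI : Finite (A →* ℂˣ) := Finite.of_equiv A e0.toEquiv.symm
  haveI : Fintype (A →* ℂˣ) := Fintype.ofFinite _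
  have hcardD : Nat.card (A →* ℂˣ) = Fintype.card A := by
    rw [Nat.card_congr e0.toEquiv, Nat.card_eq_fintype_card]
  -- duality for A ⧸ H
  haveI : NeZero ((Monoid.exponent (A ⧸ H) : ℕ) : ℂ) :=
    ⟨by exact_mod_cast Monoid.exponent_ne_zero_of_finite⟩
  obtain ⟨e1⟩ := CommGroup.monoidHom_mulEquiv_of_hasEnoughRootsOfUnity (A ⧸ H) ℂ
  -- the evaluation homomorphism
  set Φ : (A →* ℂˣ) →* ℂˣ × ℂˣ :=
    { toFun := fun χ => (χ σ, χ ρ), map_one' := rfl, map_mul' := fun _ _ => rfl } with hΦdef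
  have hΦapp : ∀ χ : A →* ℂˣ, Φ χ = (χ σ, χ ρ) := fun _ => rfl
  have hker_mem : ∀ χ : A →* ℂˣ, χ ∈ Φ.ker ↔ χ σ = 1 ∧ χ ρ = 1 := by
    intro χ
    rw [MonoidHom.mem_ker, hΦapp, Prod.ext_iff]
    exact Iff.rfl
  have hσH : σ ∈ H := (le_sup_left : Hσ ≤ H) (Subgroup.mem_zpowers σ)
  have hρH : ρ ∈ H := (le_sup_right : Hρ ≤ H) (Subgroup.mem_zpowers ρ)
  -- kernel of Φ is in bijection with characters of A ⧸ H
  have hEker : Nonempty ((A ⧸ H →* ℂˣ) ≃ Φ.ker) := by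
    refine ⟨{ toFun := fun ψ => ⟨ψ.comp (QuotientGroup.mk' H), ?_⟩
              invFun := fun χ => QuotientGroup.lift H χ.1 ?_
              left_inv := ?_
              right_inv := ?_ }⟩
    · rw [hker_mem]
      constructor
      · show ψ ((QuotientGroup.mk' H) σ) = 1
        rw [show (QuotientGroup.mk' H) σ = 1 from (QuotientGroup.eq_one_iff σ).mpr hσH, map_one]
      · show ψ ((QuotientGroup.mk' H) ρ) = 1
        rw [show (QuotientGroup.mk' H) ρ = 1 from (QuotientGroup.eq_one_iff ρ).mpr hρH, map_one]
    · exact sup_le (Subgroup.zpowers_le.mpr ((hker_mem χ.1).mp χ.2).1)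
        (Subgroup.zpowers_le.mpr ((hker_mem χ.1).mp χ.2).2)
    · intro ψ
      refine MonoidHom.ext fun x => ?_
      induction x using QuotientGroup.induction_on with
      | H g => rfl
    · intro χ
      exact Subtype.ext (MonoidHom.ext fun g => rfl)
  obtain ⟨E⟩ := hEker
  have hkerQ : Nat.card Φ.ker = Nat.card (A ⧸ H) := by
    rw [← Nat.card_congr E, Nat.card_congr e1.toEquiv]
  have hQpos : 0 < Nat.card (A ⧸ H) := Nat.card_pos
  have hlag : Fintype.card A = Nat.card (A ⧸ H) * Nat.card H := by
    rw [← Nat.card_eq_fintype_card]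
    exact Subgroup.card_eq_card_quotient_mul_card_subgroup H
  have hfirst : Nat.card Φ.range * Nat.card Φ.ker = Nat.card (A →* ℂˣ) := by
    rw [Subgroup.card_eq_card_quotient_mul_card_subgroup Φ.ker,
      Nat.card_congr (QuotientGroup.quotientKerEquivRange Φ).toEquiv]
  have hrange_card : Nat.card Φ.range = Nat.card H := by
    rw [hkerQ, hcardD, hlag] at hfirst
    exact Nat.eq_of_mul_eq_mul_right hQpos (hfirst.trans (mul_comm _ _))
  have hcardH2 : Nat.card H = n1 * (n2 / d) := by
    refine Nat.eq_of_mul_eq_mul_right hdpos (hprod.trans ?_)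
    rw [mul_assoc, Nat.div_mul_cancel hd2]
  -- the parametrizing finsets
  set eu : ℕ → ℕ → ℂˣ := fun a n => Units.mk0 (ee ((a : ℝ) / n)) (ee_ne_zero _) with heudef
  have heuval : ∀ a n : ℕ, ((eu a n : ℂˣ) : ℂ) = ee ((a : ℝ) / n) := fun a n => rfl
  set S : Finset (ℂˣ × ℂˣ) :=
    ((Finset.range n1) ×ˢ (Finset.range (n2 / d))).image
      (fun p => (eu p.1 n1, eu (h * p.1 % d + p.2 * d) n2)) with hSdef
  have harglt : ∀ a b : ℕ, b < n2 / d → h * a % d + b * d < n2 := by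
    intro a b hb
    have h1 : h * a % d < d := Nat.mod_lt _ hdpos
    have h2 : (b + 1) * d ≤ (n2 / d) * d := Nat.mul_le_mul_right d hb
    rw [Nat.div_mul_cancel hd2] at h2
    calc h * a % d + b * d < d + b * d := by omega
      _ = (b + 1) * d := by ring
      _ ≤ n2 := h2
  have hinj : Set.InjOn (fun p : ℕ × ℕ => (eu p.1 n1, eu (h * p.1 % d + p.2 * d) n2))
      (((Finset.range n1) ×ˢ (Finset.range (n2 / d)) : Finset (ℕ × ℕ)) : Set (ℕ × ℕ)) := by
    rintro ⟨a, b⟩ hab ⟨c, e⟩ hce hfe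
    simp only [Finset.coe_product, Set.mem_prod, Finset.mem_coe, Finset.mem_range,
      Finset.mem_product] at hab hce
    obtain ⟨ha, hb⟩ := hab
    obtain ⟨hc, he⟩ := hce
    have h1 : eu a n1 = eu c n1 := congrArg Prod.fst hfe
    have h2 : eu (h * a % d + b * d) n2 = eu (h * c % d + e * d) n2 := congrArg Prod.snd hfe
    have hac : a = c := ee_nat_inj ha hc (by
      have := congrArg (Units.val) h1
      rwa [heuval, heuval] at this)
    subst hac
    have hbe : h * a % d + b * d = h * a % d + e * d :=
      ee_nat_inj (harglt a b hb) (harglt a e he) (by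
        have := congrArg (Units.val) h2
        rwa [heuval, heuval] at this)
    have : b * d = e * d := by omega
    have : b = e := Nat.eq_of_mul_eq_mul_right hdpos this
    simp [this]
  have hScard : S.card = n1 * (n2 / d) := by
    rw [hSdef, Finset.card_image_of_injOn hinj, Finset.card_product, Finset.card_range,
      Finset.card_range]
  set T : Finset (ℂˣ × ℂˣ) := Finset.image Φ Finset.univ with hTdef
  have hTcard : T.card = Nat.card Φ.range := by
    have hco : (Set.range Φ) = ↑T := by rw [hTdef, Finset.coe_image, Finset.coe_univ, Set.image_univ]
    have h1 : Nat.card Φ.range = Nat.card (Set.range ⇑Φ) :=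
      Nat.card_congr (Equiv.subtypeEquivRight fun x => by
        simp [MonoidHom.mem_range, Set.mem_range])
    rw [h1, Nat.card_coe_set_eq, hco, Set.ncard_coe_finset]
  have hmemS : ∀ a b : ℕ, a < n1 → b < n2 → b ≡ h * a [MOD d] → (eu a n1, eu b n2) ∈ S := by
    intro a b ha hb hcong
    refine Finset.mem_image.mpr ⟨(a, b / d), ?_, ?_⟩
    · rw [Finset.mem_product, Finset.mem_range, Finset.mem_range]
      exact ⟨ha, Nat.div_lt_div_of_lt_of_dvd hd2 hb⟩
    · have harg : h * a % d + (b / d) * d = b := by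
        rw [← hcong, Nat.mod_add_div']
      rw [harg]
  have hTsubS : T ⊆ S := by
    intro t ht
    obtain ⟨χ, _, rfl⟩ := Finset.mem_image.mp ht
    have hσ1 : (χ σ) ^ n1 = 1 := by
      rw [← map_pow, hn1def, pow_orderOf_eq_one, map_one]
    have hρ1 : (χ ρ) ^ n2 = 1 := by
      rw [← map_pow, hn2def, pow_orderOf_eq_one, map_one]
    obtain ⟨a, ha, hva⟩ := units_param hn1 (χ σ) hσ1
    obtain ⟨b, hb, hvb⟩ := units_param hn2 (χ ρ) hρ1
    have hχeq : (χ ρ) ^ (n2 / d) = ((χ σ) ^ (n1 / d)) ^ h := by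
      have := congrArg χ hh
      rwa [map_pow, map_pow, map_pow] at this
    have hval := congrArg (Units.val) hχeq
    simp only [Units.val_pow_eq_pow_val] at hval
    rw [hva, hvb] at hval
    have hcong : b ≡ h * a [MOD d] := ee_compat hd1 hd2 hdpos hn1 hn2 hval
    have hΦχ : Φ χ = (eu a n1, eu b n2) := by
      rw [hΦapp]
      exact Prod.ext (Units.ext (by rw [heuval]; exact hva)) (Units.ext (by rw [heuval]; exact hvb))
    rw [hΦχ]
    exact hmemS a b ha hb hcong
  have hTS : T = S := Finset.eq_of_subset_of_card_le hTsubS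
    (by rw [hScard, hTcard, hrange_card, hcardH2])
  -- the main iff
  have hiff : (∃ χ : A →* ℂˣ, (χ σ : ℂ) = ee ((u : ℝ) / n1) ∧
      (χ ρ : ℂ) = ee ((v : ℝ) / n2)) ↔ v ≡ h * u [MOD d] := by
    constructor
    · rintro ⟨χ, h1, h2⟩
      have hχeq : (χ ρ) ^ (n2 / d) = ((χ σ) ^ (n1 / d)) ^ h := by
        have := congrArg χ hh
        rwa [map_pow, map_pow, map_pow] at this
      have hval := congrArg (Units.val) hχeq
      simp only [Units.val_pow_eq_pow_val] at hval
      rw [h1, h2] at hval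
      exact ee_compat hd1 hd2 hdpos hn1 hn2 hval
    · intro hcong
      have hmem : (eu u n1, eu v n2) ∈ S := hmemS u v hu hv hcong
      rw [← hTS] at hmem
      obtain ⟨χ, _, hχ⟩ := Finset.mem_image.mp hmem
      refine ⟨χ, ?_, ?_⟩
      · have := congrArg (fun t : ℂˣ × ℂˣ => (t.1 : ℂ)) hχ
        simpa [hΦapp, heuval] using this
      · have := congrArg (fun t : ℂˣ × ℂˣ => (t.2 : ℂ)) hχ
        simpa [hΦapp, heuval] using this
  refine ⟨hiff, fun hcong => ?_⟩
  obtain ⟨χ₀, hχ₀1, hχ₀2⟩ := hiff.mpr hcong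
  -- the fiber is in bijection with the kernel
  have hfiber : Nonempty ({χ : A →* ℂˣ // (χ σ : ℂ) = ee ((u : ℝ) / n1) ∧
      (χ ρ : ℂ) = ee ((v : ℝ) / n2)} ≃ Φ.ker) := by
    refine ⟨{ toFun := fun χ => ⟨χ₀⁻¹ * χ.1, ?_⟩
              invFun := fun ψ => ⟨χ₀ * ψ.1, ?_⟩
              left_inv := ?_
              right_inv := ?_ }⟩
    · rw [hker_mem]
      have e1 : χ.1 σ = χ₀ σ := Units.ext (by rw [χ.2.1, hχ₀1])
      have e2 : χ.1 ρ = χ₀ ρ := Units.ext (by rw [χ.2.2, hχ₀2])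
      constructor
      · show (χ₀ σ)⁻¹ * χ.1 σ = 1
        rw [e1, inv_mul_cancel]
      · show (χ₀ ρ)⁻¹ * χ.1 ρ = 1
        rw [e2, inv_mul_cancel]
    · have h1 : ψ.1 σ = 1 := ((hker_mem ψ.1).mp ψ.2).1
      have h2 : ψ.1 ρ = 1 := ((hker_mem ψ.1).mp ψ.2).2
      constructor
      · show ((χ₀ σ * ψ.1 σ : ℂˣ) : ℂ) = ee ((u : ℝ) / n1)
        rw [h1, mul_one, hχ₀1]
      · show ((χ₀ ρ * ψ.1 ρ : ℂˣ) : ℂ) = ee ((v : ℝ) / n2)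
        rw [h2, mul_one, hχ₀2]
    · intro χ
      exact Subtype.ext (mul_inv_cancel_left χ₀ χ.1)
    · intro ψ
      exact Subtype.ext (inv_mul_cancel_left χ₀ ψ.1)
  obtain ⟨F⟩ := hfiber
  rw [Nat.card_congr F, hkerQ]
  rw [hlag, mul_assoc, hprod]
  exact (Nat.mul_div_cancel _ (Nat.mul_pos hn1 hn2)).symm
end

section
/- Let A be a finite abelian group of order n, let σ, ρ ∈ A be nontrivial, set d = |⟨σ⟩ ∩ ⟨ρ⟩| and h ∈ (ℤ/dℤ)× with ρ^{o(ρ)/d} = (σ^{o(σ)/d})^h. Define γ_{σ,ρ} = (1/n)·∑_{χ ∈ Â} u_{χ,σ}·u_{χ,ρ}/(o(σ)·o(ρ)). Then γ_{σ,ρ} = φ_{h,d}(0)/(o(σ)o(ρ)) + (o(σ)-1)(o(ρ)-1)/(4·o(σ)·o(ρ)), where φ_{h,d}(0) = ∑_{k=1}^{d-1} 1/((1-e(kh/d))(1-e(-k/d))). -/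
/-- The generalized Dedekind sum
`φ_{h,d}(s) = ∑_{k=1}^{d-1} e(ks/d) / ((1 - e(kh/d)) (1 - e(-k/d)))`. -/
noncomputable def phi (h : ℤ) (d : ℕ) (s : ℤ) : ℂ :=
  ∑ k ∈ Finset.Ico 1 d,
    ee ((k : ℝ) * (s : ℝ) / d) /
      ((1 - ee ((k : ℝ) * (h : ℝ) / d)) * (1 - ee (-(k : ℝ) / d)))



lemma ee_add (x y : ℝ) : ee (x + y) = ee x * ee y := by
  simp [ee, ← Complex.exp_add]; ring_nf

lemma ee_zero : ee 0 = 1 := by simp [ee]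

lemma ee_nat_div (a m : ℕ) : ee ((a : ℝ) / m) = ee (1 / m) ^ a := by
  rw [ee, ee, ← Complex.exp_nat_mul]
  congr 1
  push_cast
  ring

lemma ee_one_div_eq : ∀ m : ℕ, ee (1 / m) = Complex.exp (2 * Real.pi * Complex.I / m) := by
  intro m; rw [ee]; congr 1; push_cast; ring

lemma ee_prim (m : ℕ) (hm : m ≠ 0) : IsPrimitiveRoot (ee (1 / m)) m := by
  rw [ee_one_div_eq]; exact Complex.isPrimitiveRoot_exp m hm

lemma ee_pow_self (m : ℕ) (hm : m ≠ 0) : ee (1 / m) ^ m = 1 := (ee_prim m hm).pow_eq_one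

lemma ee_neg_nat_div (a m : ℕ) (hm : m ≠ 0) : ee (-(a : ℝ) / m) = (ee (1/m) ^ a)⁻¹ := by
  have : ee (-(a:ℝ)/m) * ee ((a:ℝ)/m) = 1 := by
    rw [← ee_add]; ring_nf; exact ee_zero
  rw [← ee_nat_div]
  exact eq_inv_of_mul_eq_one_left this

-- (w - 1) * ∑ j w^j identity
lemma sum_jw (w : ℂ) (m : ℕ) :
    (w - 1) * ∑ j ∈ Finset.range m, (j : ℂ) * w ^ j
      = ((m : ℂ) - 1) * w ^ m - (∑ j ∈ Finset.range m, w ^ j) + 1 := by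
  induction m with
  | zero => simp
  | succ m ih =>
    rw [Finset.sum_range_succ, Finset.sum_range_succ, mul_add, ih]
    push_cast
    ring

lemma sum_jw_eq (w : ℂ) (m : ℕ) (hw : w ≠ 1) (hwm : w ^ m = 1) :
    ∑ j ∈ Finset.range m, (j : ℂ) * w ^ j = m / (w - 1) := by
  have hgeom : ∑ j ∈ Finset.range m, w ^ j = 0 := by
    have := geom_sum_mul w m
    rw [hwm, sub_self] at this
    rcases mul_eq_zero.mp this with h | h
    · exact h
    · exact absurd (sub_eq_zero.mp h) hw
  have h1 : w - 1 ≠ 0 := sub_ne_zero.mpr hw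
  field_simp
  rw [mul_comm, sum_jw, hwm, hgeom]
  ring

lemma sum_pow_eq_ite (w : ℂ) (m : ℕ) (hwm : w ^ m = 1) :
    ∑ j ∈ Finset.range m, w ^ j = if w = 1 then (m : ℂ) else 0 := by
  split_ifs with h
  · simp [h]
  · have := geom_sum_mul w m
    rw [hwm, sub_self] at this
    rcases mul_eq_zero.mp this with h' | h'
    · exact h'
    · exact absurd (sub_eq_zero.mp h') h

lemma sum_range_cast (m : ℕ) (hm : m ≠ 0) :
    ∑ j ∈ Finset.range m, (j : ℂ) = (m : ℂ) * ((m : ℂ) - 1) / 2 := by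
  have h2 := Finset.sum_range_id_mul_two m
  have : ((∑ i ∈ Finset.range m, i : ℕ) : ℂ) * 2 = (m : ℂ) * ((m : ℂ) - 1) := by
    rw [← Nat.cast_ofNat, ← Nat.cast_mul, h2]
    have : ((m - 1 : ℕ) : ℂ) = (m : ℂ) - 1 := by
      rw [Nat.cast_pred (Nat.pos_of_ne_zero hm)]
    push_cast [this]
    ring
  rw [Nat.cast_sum] at this
  linear_combination this / 2

lemma sawtooth (m u : ℕ) (hm : m ≠ 0) (hu : u < m) :
    ∑ k ∈ Finset.Ico 1 m, ee (1/m) ^ (u * k) / (1 - (ee (1/m) ^ k)⁻¹)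
      = ((m : ℂ) - 1) / 2 - u := by
  set ζ := ee (1/m) with hζdef
  have hprim := ee_prim m hm
  have hζ0 : ζ ≠ 0 := by rw [hζdef, ee]; exact Complex.exp_ne_zero _
  have hm' : (m : ℂ) ≠ 0 := Nat.cast_ne_zero.mpr hm
  have hterm : ∀ k ∈ Finset.Ico 1 m,
      ζ ^ (u*k) / (1 - (ζ^k)⁻¹)
        = ∑ j ∈ Finset.range m, -((j:ℂ) * (ζ^(u*k) * ((ζ^k)⁻¹)^j) / m) := by
    intro k hk
    obtain ⟨hk1, hk2⟩ := Finset.mem_Ico.mp hk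
    have hzk : ζ ^ k ≠ 1 := hprim.pow_ne_one_of_pos_of_lt (by omega) hk2
    have hw : (ζ^k)⁻¹ ≠ 1 := fun hcon => hzk (inv_eq_one.mp hcon)
    have hwm : ((ζ^k)⁻¹)^m = 1 := by
      rw [inv_pow, ← pow_mul, mul_comm k m, pow_mul, hprim.pow_eq_one, one_pow, inv_one]
    have h1 : (ζ^k)⁻¹ - 1 ≠ 0 := sub_ne_zero.mpr hw
    have h2 : (1 : ℂ) - (ζ^k)⁻¹ ≠ 0 := sub_ne_zero.mpr (Ne.symm hw)
    have h3 : ζ^k - 1 ≠ 0 := sub_ne_zero.mpr hzk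
    have h4 : (1:ℂ) - ζ^k ≠ 0 := sub_ne_zero.mpr (Ne.symm hzk)
    have h5 : ζ^k ≠ 0 := pow_ne_zero _ hζ0
    calc ζ ^ (u*k) / (1 - (ζ^k)⁻¹)
        = -(ζ^(u*k)/m) * ((m:ℂ)/((ζ^k)⁻¹ - 1)) := by
          field_simp
          ring
      _ = -(ζ^(u*k)/m) * ∑ j ∈ Finset.range m, (j:ℂ) * ((ζ^k)⁻¹)^j := by
          rw [sum_jw_eq _ m hw hwm]
      _ = ∑ j ∈ Finset.range m, -((j:ℂ) * (ζ^(u*k) * ((ζ^k)⁻¹)^j) / m) := by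
          rw [Finset.mul_sum]
          exact Finset.sum_congr rfl fun j _ => by ring
  rw [Finset.sum_congr rfl hterm, Finset.sum_comm]
  have inner : ∀ j ∈ Finset.range m,
      ∑ k ∈ Finset.Ico 1 m, -((j:ℂ) * (ζ^(u*k) * ((ζ^k)⁻¹)^j) / m)
        = -((j:ℂ)/m) * ((if j = u then (m:ℂ) else 0) - 1) := by
    intro j hj
    have hj' := Finset.mem_range.mp hj
    set v := ζ^u * (ζ^j)⁻¹ with hv
    have hvm : v^m = 1 := by
      rw [hv, mul_pow, inv_pow, ← pow_mul, ← pow_mul, mul_comm u m, mul_comm j m,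
        pow_mul, pow_mul, hprim.pow_eq_one, one_pow, one_pow, inv_one, mul_one]
    have hX : ∀ k : ℕ, ζ^(u*k) * ((ζ^k)⁻¹)^j = v^k := by
      intro k
      rw [hv, mul_pow, ← pow_mul, inv_pow, inv_pow, ← pow_mul, mul_comm k j, mul_comm u k, mul_comm k u, ← pow_mul]
    have hvsum : ∑ k ∈ Finset.Ico 1 m, v^k = (if v = 1 then (m:ℂ) else 0) - 1 := by
      have hfull := sum_pow_eq_ite v m hvm
      rw [Finset.range_eq_Ico, Finset.sum_eq_sum_Ico_succ_bot (Nat.pos_of_ne_zero hm)] at hfull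
      rw [pow_zero] at hfull
      linear_combination hfull
    have hiff : (v = 1) ↔ (j = u) := by
      rw [hv, mul_inv_eq_one₀ (pow_ne_zero j hζ0)]
      constructor
      · intro hcon; exact (hprim.pow_inj hu hj' hcon).symm
      · intro hcon; rw [hcon]
    have hcond : (if v = 1 then (m:ℂ) else 0) = (if j = u then (m:ℂ) else 0) :=
      if_congr hiff rfl rfl
    calc ∑ k ∈ Finset.Ico 1 m, -((j:ℂ) * (ζ^(u*k) * ((ζ^k)⁻¹)^j) / m)
        = -((j:ℂ)/m) * ∑ k ∈ Finset.Ico 1 m, v^k := by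
          rw [Finset.mul_sum]
          exact Finset.sum_congr rfl fun k _ => by rw [hX k]; ring
      _ = -((j:ℂ)/m) * ((if j = u then (m:ℂ) else 0) - 1) := by rw [hvsum, hcond]
  rw [Finset.sum_congr rfl inner]
  have hsimp : ∀ j ∈ Finset.range m, -((j:ℂ)/m) * ((if j = u then (m:ℂ) else 0) - 1)
      = (if j = u then -(j:ℂ) else 0) + (j:ℂ)/m := by
    intro j _
    split_ifs with hju
    · field_simp
      ring
    · ring
  rw [Finset.sum_congr rfl hsimp, Finset.sum_add_distrib,
    Finset.sum_ite_eq' (Finset.range m) u (fun j => -(j:ℂ)),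
    if_pos (Finset.mem_range.mpr hu), ← Finset.sum_div, sum_range_cast m hm]
  field_simp
  ring

lemma eq_of_dvd_of_lt_two (d s : ℕ) (hdvd : d ∣ s) (h0 : 0 < s) (h2 : s < 2*d) : s = d := by
  obtain ⟨c, rfl⟩ := hdvd
  have hd : 0 < d := Nat.pos_of_ne_zero (by rintro rfl; simp at h0)
  rcases c with _ | _ | c
  · omega
  · omega
  · exfalso; nlinarith

lemma dvd_of_pow_mem_zpowers_pow (G : Type*) [Group G] (a : G) (e k : ℕ) (he : e ∣ orderOf a)
    (hmem : a ^ k ∈ Subgroup.zpowers (a ^ e)) : e ∣ k := by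
  obtain ⟨t, ht⟩ := Subgroup.mem_zpowers_iff.mp hmem
  have h1 : a ^ ((e : ℤ) * t - (k : ℤ)) = 1 := by
    rw [zpow_sub, zpow_mul, zpow_natCast, zpow_natCast, ht, mul_inv_cancel]
  have h2 : (orderOf a : ℤ) ∣ (e : ℤ) * t - k := orderOf_dvd_iff_zpow_eq_one.mpr h1
  have h3 : (e : ℤ) ∣ (e : ℤ) * t - k := dvd_trans (Int.natCast_dvd_natCast.mpr he) h2
  have h4 : (e : ℤ) ∣ (k : ℤ) := by
    have := dvd_sub (Dvd.intro t rfl) h3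
    simpa using this
  exact_mod_cast h4

open scoped Classical in
lemma orth {A : Type*} [CommGroup A] [Fintype A] [Fintype (A →* ℂˣ)] (a : A) :
    ∑ χ : A →* ℂˣ, ((χ a : ℂˣ) : ℂ) = if a = 1 then (Fintype.card A : ℂ) else 0 := by
  split_ifs with h
  · subst h
    obtain ⟨e⟩ := CommGroup.monoidHom_mulEquiv_of_hasEnoughRootsOfUnity A ℂ
    have hcard : Fintype.card (A →* ℂˣ) = Fintype.card A := Fintype.card_congr e.toEquiv
    simp [hcard]
  · obtain ⟨φ, hφ⟩ := CommGroup.exists_apply_ne_one_of_hasEnoughRootsOfUnity A ℂ h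
    have key : ∑ χ : A →* ℂˣ, ((χ a : ℂˣ) : ℂ)
        = ∑ χ : A →* ℂˣ, ((φ a : ℂˣ) : ℂ) * ((χ a : ℂˣ) : ℂ) := by
      refine Fintype.sum_equiv (Equiv.mulLeft φ⁻¹) _ _ fun χ => ?_
      simp [Units.val_mul, MonoidHom.inv_apply, Units.val_inv_eq_inv_val,
        mul_inv_cancel_left₀]
    have hφ1 : ((φ a : ℂˣ) : ℂ) ≠ 1 := by
      intro hc
      exact hφ (Units.ext (by simpa using hc))
    rw [← Finset.mul_sum] at key
    have : (((φ a : ℂˣ) : ℂ) - 1) * ∑ χ : A →* ℂˣ, ((χ a : ℂˣ) : ℂ) = 0 := by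
      rw [sub_mul, one_mul, ← key, sub_self]
    rcases mul_eq_zero.mp this with h' | h'
    · exact absurd (by linear_combination h' : ((φ a : ℂˣ) : ℂ) = 1) hφ1
    · exact h'

lemma inter_facts {A : Type*} [CommGroup A] [Fintype A] (σ ρ : A)
    (d : ℕ) (hd : d = Nat.card ↥(Subgroup.zpowers σ ⊓ Subgroup.zpowers ρ))
    (h : ℕ) (hh : ρ ^ (orderOf ρ / d) = (σ ^ (orderOf σ / d)) ^ h) :
    0 < d ∧ d ∣ orderOf σ ∧ d ∣ orderOf ρ ∧ Nat.Coprime h d ∧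
      orderOf (σ ^ (orderOf σ / d)) = d ∧
      (Subgroup.zpowers σ ⊓ Subgroup.zpowers ρ) = Subgroup.zpowers (ρ ^ (orderOf ρ / d)) := by
  have hd0 : 0 < d := hd ▸ Nat.card_pos
  have hdσ : d ∣ orderOf σ := by
    rw [hd, ← Nat.card_zpowers σ]
    exact Subgroup.card_dvd_of_le inf_le_left
  have hdρ : d ∣ orderOf ρ := by
    rw [hd, ← Nat.card_zpowers ρ]
    exact Subgroup.card_dvd_of_le inf_le_right
  have hoσ : orderOf (σ ^ (orderOf σ / d)) = d := by
    rw [orderOf_pow, Nat.gcd_eq_right (Nat.div_dvd_of_dvd hdσ),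
      Nat.div_div_self hdσ (orderOf_pos σ).ne']
  have hoρ : orderOf (ρ ^ (orderOf ρ / d)) = d := by
    rw [orderOf_pow, Nat.gcd_eq_right (Nat.div_dvd_of_dvd hdρ),
      Nat.div_div_self hdρ (orderOf_pos ρ).ne']
  have hρ0mem : ρ ^ (orderOf ρ / d) ∈ Subgroup.zpowers σ ⊓ Subgroup.zpowers ρ := by
    refine Subgroup.mem_inf.mpr ⟨?_, ?_⟩
    · rw [hh]; exact Subgroup.pow_mem _ (Subgroup.pow_mem _ (Subgroup.mem_zpowers σ) _) _
    · exact Subgroup.pow_mem _ (Subgroup.mem_zpowers ρ) _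
  have hIle : Subgroup.zpowers (ρ ^ (orderOf ρ / d)) ≤ Subgroup.zpowers σ ⊓ Subgroup.zpowers ρ :=
    Subgroup.zpowers_le.mpr hρ0mem
  have hcardle : Nat.card ↥(Subgroup.zpowers σ ⊓ Subgroup.zpowers ρ)
      ≤ Nat.card ↥(Subgroup.zpowers (ρ ^ (orderOf ρ / d))) := by
    rw [Nat.card_zpowers, hoρ, ← hd]
  have hIeq : (Subgroup.zpowers σ ⊓ Subgroup.zpowers ρ)
      = Subgroup.zpowers (ρ ^ (orderOf ρ / d)) :=
    (SetLike.ext' (Set.eq_of_subset_of_ncard_le hIle hcardle)).symm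
  have hcop : Nat.Coprime h d := by
    have h1 : orderOf ((σ ^ (orderOf σ / d)) ^ h) = d := by rw [← hh]; exact hoρ
    rw [orderOf_pow, hoσ] at h1
    have hg : Nat.gcd d h ∣ d := Nat.gcd_dvd_left d h
    have h2 : d / Nat.gcd d h * Nat.gcd d h = d := Nat.div_mul_cancel hg
    rw [h1] at h2
    have h3 : Nat.gcd d h = 1 := by
      have := Nat.eq_of_mul_eq_mul_left hd0 (by rw [h2, mul_one] : d * Nat.gcd d h = d * 1)
      exact this
    exact Nat.coprime_comm.mp h3
  exact ⟨hd0, hdσ, hdρ, hcop, hoσ, hIeq⟩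

lemma ee_pow_div (m d : ℕ) (hm : m ≠ 0) (hdvd : d ∣ m) (hd0 : d ≠ 0) :
    ee (1/(m:ℝ)) ^ (m/d) = ee (1/(d:ℝ)) := by
  rw [← ee_nat_div]
  congr 1
  have hm' : (m : ℝ) ≠ 0 := Nat.cast_ne_zero.mpr hm
  have hd' : (d : ℝ) ≠ 0 := Nat.cast_ne_zero.mpr hd0
  rw [Nat.cast_div hdvd hd']
  field_simp

lemma pow_mod_eq (ζ : ℂ) (d a : ℕ) (h1 : ζ^d = 1) : ζ^a = ζ^(a % d) := by
  conv_lhs => rw [← Nat.div_add_mod a d]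
  rw [pow_add, pow_mul, h1, one_pow, one_mul]

lemma pairs_sum {A : Type*} [CommGroup A] [Fintype A] (σ ρ : A) (d h : ℕ)
    [DecidablePred (fun p : ℕ × ℕ => σ ^ p.1 * ρ ^ p.2 = 1)]
    (hd0 : 0 < d) (hdσ : d ∣ orderOf σ) (hdρ : d ∣ orderOf ρ) (hcop : Nat.Coprime h d)
    (hoσ : orderOf (σ ^ (orderOf σ / d)) = d)
    (hIeq : Subgroup.zpowers σ ⊓ Subgroup.zpowers ρ = Subgroup.zpowers (ρ ^ (orderOf ρ / d)))
    (hh : ρ ^ (orderOf ρ / d) = (σ ^ (orderOf σ / d)) ^ h) :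
    ∑ p ∈ (Finset.Ico 1 (orderOf σ) ×ˢ Finset.Ico 1 (orderOf ρ)).filter
        (fun p => σ ^ p.1 * ρ ^ p.2 = 1),
      (1 - (ee (1/(orderOf σ : ℝ)) ^ p.1)⁻¹)⁻¹ * (1 - (ee (1/(orderOf ρ : ℝ)) ^ p.2)⁻¹)⁻¹
      = phi (h : ℤ) d 0 := by
  have hMσ : orderOf σ ≠ 0 := (orderOf_pos σ).ne'
  have hMρ : orderOf ρ ≠ 0 := (orderOf_pos ρ).ne'
  set Mσ := orderOf σ with hMσdef
  set Mρ := orderOf ρ with hMρdef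
  set eσ := Mσ / d with heσdef
  set eρ := Mρ / d with heρdef
  have heσd : eσ * d = Mσ := Nat.div_mul_cancel hdσ
  have heρd : eρ * d = Mρ := Nat.div_mul_cancel hdρ
  have heσ0 : 0 < eσ := Nat.div_pos (Nat.le_of_dvd (Nat.pos_of_ne_zero hMσ) hdσ) hd0
  have heρ0 : 0 < eρ := Nat.div_pos (Nat.le_of_dvd (Nat.pos_of_ne_zero hMρ) hdρ) hd0
  have hrpos : ∀ κ, 1 ≤ κ → κ < d → 0 < h * κ % d := by
    intro κ h1 h2
    rcases Nat.eq_zero_or_pos (h * κ % d) with h0 | h0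
    · exfalso
      have hdvd : d ∣ h * κ := Nat.dvd_of_mod_eq_zero h0
      have : d ∣ κ := (Nat.Coprime.symm hcop).dvd_of_dvd_mul_left hdvd
      exact absurd (Nat.le_of_dvd (by omega) this) (by omega)
    · exact h0
  -- facts about members of the pair set
  have hfacts : ∀ p : ℕ × ℕ, p ∈ (Finset.Ico 1 Mσ ×ˢ Finset.Ico 1 Mρ).filter
      (fun p => σ ^ p.1 * ρ ^ p.2 = 1) →
      eσ ∣ p.1 ∧ eρ ∣ p.2 ∧ d ∣ p.1/eσ + h * (p.2/eρ) := by
    intro p hp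
    obtain ⟨hmem, hprod⟩ := Finset.mem_filter.mp hp
    obtain ⟨h1, h2⟩ := Finset.mem_product.mp hmem
    have hρinv : ρ ^ p.2 = (σ ^ p.1)⁻¹ := eq_inv_of_mul_eq_one_right hprod
    have hρl : ρ ^ p.2 ∈ Subgroup.zpowers σ ⊓ Subgroup.zpowers ρ := by
      refine Subgroup.mem_inf.mpr ⟨?_, Subgroup.pow_mem _ (Subgroup.mem_zpowers ρ) _⟩
      rw [hρinv]
      exact inv_mem (Subgroup.pow_mem _ (Subgroup.mem_zpowers σ) _)
    have heρl : eρ ∣ p.2 := by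
      refine dvd_of_pow_mem_zpowers_pow A ρ eρ p.2 (Nat.div_dvd_of_dvd hdρ) ?_
      rw [← hIeq]; exact hρl
    have hle : Subgroup.zpowers (ρ ^ eρ) ≤ Subgroup.zpowers (σ ^ eσ) :=
      Subgroup.zpowers_le.mpr (by rw [hh]; exact Subgroup.pow_mem _ (Subgroup.mem_zpowers _) _)
    have hσmem : σ ^ p.1 ∈ Subgroup.zpowers σ ⊓ Subgroup.zpowers ρ := by
      have : σ ^ p.1 = (ρ ^ p.2)⁻¹ := eq_inv_of_mul_eq_one_left hprod
      rw [this]; exact inv_mem hρl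
    have heσl : eσ ∣ p.1 := by
      refine dvd_of_pow_mem_zpowers_pow A σ eσ p.1 (Nat.div_dvd_of_dvd hdσ) ?_
      exact hle (hIeq ▸ hσmem)
    refine ⟨heσl, heρl, ?_⟩
    have e1 : σ ^ p.1 = (σ ^ eσ) ^ (p.1/eσ) := by
      rw [← pow_mul, Nat.mul_div_cancel' heσl]
    have e2 : ρ ^ p.2 = (σ ^ eσ) ^ (h * (p.2/eρ)) := by
      rw [pow_mul, ← hh, ← pow_mul, Nat.mul_div_cancel' heρl]
    have hσ0pow : (σ ^ eσ) ^ (p.1/eσ + h * (p.2/eρ)) = 1 := by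
      rw [pow_add, ← e1, ← e2, hprod]
    exact hoσ ▸ orderOf_dvd_of_pow_eq_one hσ0pow
  rw [phi]
  refine (Finset.sum_nbij' (fun κ => ((eσ * (d - h * κ % d), eρ * κ) : ℕ × ℕ))
    (fun p => p.2 / eρ) ?_ ?_ ?_ ?_ ?_).symm
  · -- hi : maps Ico 1 d into the filtered pair set
    intro κ hκ
    obtain ⟨hκ1, hκ2⟩ := Finset.mem_Ico.mp hκ
    have hr1 := hrpos κ hκ1 hκ2
    have hr2 : h * κ % d < d := Nat.mod_lt _ hd0
    refine Finset.mem_filter.mpr ⟨Finset.mem_product.mpr ⟨?_, ?_⟩, ?_⟩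
    · refine Finset.mem_Ico.mpr ⟨Nat.one_le_iff_ne_zero.mpr
        (Nat.mul_ne_zero (by omega) (by omega)), ?_⟩
      calc eσ * (d - h * κ % d) < eσ * d := by
            exact mul_lt_mul_of_pos_left (by omega) heσ0
        _ = Mσ := heσd
    · refine Finset.mem_Ico.mpr ⟨Nat.one_le_iff_ne_zero.mpr
        (Nat.mul_ne_zero (by omega) (by omega)), ?_⟩
      calc eρ * κ < eρ * d := mul_lt_mul_of_pos_left (by omega) heρ0
        _ = Mρ := heρd
    · show σ ^ (eσ * (d - h * κ % d)) * ρ ^ (eρ * κ) = 1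
      have e2 : ρ ^ (eρ * κ) = (σ ^ eσ) ^ (h * κ) := by
        rw [pow_mul, hh, ← pow_mul, mul_comm h κ, pow_mul]
      rw [pow_mul σ eσ, e2, ← pow_add]
      refine orderOf_dvd_iff_pow_eq_one.mp ?_
      rw [hoσ]
      refine ⟨1 + h * κ / d, ?_⟩
      have hdm := Nat.div_add_mod (h * κ) d
      rw [Nat.mul_add, Nat.mul_one]
      omega
  · -- hj : inverse maps into Ico 1 d
    intro p hp
    show p.2 / eρ ∈ Finset.Ico 1 d
    obtain ⟨heσl, heρl, hdl⟩ := hfacts p hp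
    obtain ⟨hmem, hprod⟩ := Finset.mem_filter.mp hp
    obtain ⟨h1, h2⟩ := Finset.mem_product.mp hmem
    obtain ⟨h11, h12⟩ := Finset.mem_Ico.mp h1
    obtain ⟨h21, h22⟩ := Finset.mem_Ico.mp h2
    have hl : eρ * (p.2 / eρ) = p.2 := Nat.mul_div_cancel' heρl
    refine Finset.mem_Ico.mpr ⟨?_, ?_⟩
    · rcases Nat.eq_zero_or_pos (p.2 / eρ) with h0 | h0
      · rw [h0, Nat.mul_zero] at hl; omega
      · omega
    · have : eρ * (p.2 / eρ) < eρ * d := by rw [hl, heρd]; exact h22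
      exact Nat.lt_of_mul_lt_mul_left this
  · -- left inverse
    intro κ hκ
    exact Nat.mul_div_cancel_left κ heρ0
  · -- right inverse
    intro p hp
    obtain ⟨heσl, heρl, hdl⟩ := hfacts p hp
    obtain ⟨hmem, hprod⟩ := Finset.mem_filter.mp hp
    obtain ⟨h1, h2⟩ := Finset.mem_product.mp hmem
    obtain ⟨h11, h12⟩ := Finset.mem_Ico.mp h1
    obtain ⟨h21, h22⟩ := Finset.mem_Ico.mp h2
    have hk : eσ * (p.1 / eσ) = p.1 := Nat.mul_div_cancel' heσl
    have hl : eρ * (p.2 / eρ) = p.2 := Nat.mul_div_cancel' heρl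
    set κ' := p.2 / eρ with hκ'def
    set j' := p.1 / eσ with hj'def
    have hκ'1 : 1 ≤ κ' := by
      rcases Nat.eq_zero_or_pos κ' with h0 | h0
      · rw [h0, Nat.mul_zero] at hl; omega
      · omega
    have hκ'2 : κ' < d := by
      have : eρ * κ' < eρ * d := by rw [hl, heρd]; exact h22
      exact Nat.lt_of_mul_lt_mul_left this
    have hj'1 : 1 ≤ j' := by
      rcases Nat.eq_zero_or_pos j' with h0 | h0
      · rw [h0, Nat.mul_zero] at hk; omega
      · omega
    have hj'2 : j' < d := by
      have : eσ * j' < eσ * d := by rw [hk, heσd]; exact h12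
      exact Nat.lt_of_mul_lt_mul_left this
    have hr1 := hrpos κ' hκ'1 hκ'2
    have hr2 : h * κ' % d < d := Nat.mod_lt _ hd0
    have hdm := Nat.div_add_mod (h * κ') d
    have hdvd2 : d ∣ j' + h * κ' % d := by
      have hsub := Nat.dvd_sub hdl (Dvd.intro (h * κ' / d) rfl)
      have heq : j' + h * κ' - d * (h * κ' / d) = j' + h * κ' % d := by omega
      rwa [heq] at hsub
    have hjr : j' + h * κ' % d = d :=
      eq_of_dvd_of_lt_two d _ hdvd2 (by omega) (by omega)
    have hj'eq : j' = d - h * κ' % d := by omega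
    show (eσ * (d - h * κ' % d), eρ * κ') = p
    rw [← hj'eq, hk, hl]
  · -- values agree
    intro κ hκ
    obtain ⟨hκ1, hκ2⟩ := Finset.mem_Ico.mp hκ
    have hr1 := hrpos κ hκ1 hκ2
    have hr2 : h * κ % d < d := Nat.mod_lt _ hd0
    have hd0' : d ≠ 0 := hd0.ne'
    have hζdd : ee (1/(d:ℝ)) ^ d = 1 := ee_pow_self d hd0'
    have f1 : (ee (1/(Mσ:ℝ)) ^ (eσ * (d - h * κ % d)))⁻¹ = ee ((κ:ℝ) * (h:ℝ) / d) := by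
      rw [pow_mul, ee_pow_div Mσ d hMσ hdσ hd0']
      have h2' : ee (1/(d:ℝ)) ^ (d - h * κ % d) * ee (1/(d:ℝ)) ^ (h * κ % d) = 1 := by
        rw [← pow_add, Nat.sub_add_cancel (le_of_lt hr2), hζdd]
      rw [inv_eq_of_mul_eq_one_right h2']
      rw [show (κ:ℝ) * (h:ℝ) / d = ((κ * h : ℕ) : ℝ) / d by push_cast; ring, ee_nat_div,
        pow_mod_eq _ d (κ * h) hζdd, mul_comm κ h]
    have f2 : (ee (1/(Mρ:ℝ)) ^ (eρ * κ))⁻¹ = ee (-(κ:ℝ) / d) := by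
      rw [pow_mul, ee_pow_div Mρ d hMρ hdρ hd0', ← ee_neg_nat_div κ d hd0']
    show ee ((κ:ℝ) * ((0:ℤ) : ℝ) / d) / ((1 - ee ((κ:ℝ) * (((h:ℤ)) : ℝ) / d)) * (1 - ee (-(κ:ℝ) / d)))
      = (1 - (ee (1/(Mσ:ℝ)) ^ (eσ * (d - h * κ % d)))⁻¹)⁻¹ * (1 - (ee (1/(Mρ:ℝ)) ^ (eρ * κ))⁻¹)⁻¹
    rw [f1, f2]
    have hz : ee ((κ:ℝ) * ((0:ℤ) : ℝ) / d) = 1 := by norm_num [ee_zero]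
    have hc : ((((h:ℤ)) : ℝ)) = ((h:ℕ) : ℝ) := by push_cast; ring
    rw [hz, hc, one_div, mul_inv]

theorem gamma_eq_phi {A : Type*} [CommGroup A] [Fintype A] [Fintype (A →* ℂˣ)]
    (σ ρ : A) (hσ : σ ≠ 1) (hρ : ρ ≠ 1)
    (d : ℕ) (hd : d = Nat.card ↥(Subgroup.zpowers σ ⊓ Subgroup.zpowers ρ))
    (h : ℕ) (hh : ρ ^ (orderOf ρ / d) = (σ ^ (orderOf σ / d)) ^ h)
    (uσ uρ : (A →* ℂˣ) → ℕ)
    (huσ : ∀ χ : A →* ℂˣ, uσ χ < orderOf σ ∧ (χ σ : ℂ) = ee ((uσ χ : ℝ) / orderOf σ))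
    (huρ : ∀ χ : A →* ℂˣ, uρ χ < orderOf ρ ∧ (χ ρ : ℂ) = ee ((uρ χ : ℝ) / orderOf ρ)) :
    (1 / (Fintype.card A : ℂ)) *
        ∑ χ : A →* ℂˣ, ((uσ χ : ℂ) * (uρ χ : ℂ)) / ((orderOf σ : ℂ) * (orderOf ρ : ℂ))
      = phi (h : ℤ) d 0 / ((orderOf σ : ℂ) * (orderOf ρ : ℂ))
        + ((orderOf σ : ℂ) - 1) * ((orderOf ρ : ℂ) - 1)
            / (4 * (orderOf σ : ℂ) * (orderOf ρ : ℂ)) := by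
  classical
  obtain ⟨hd0, hdσ, hdρ, hcop, hoσ, hIeq⟩ := inter_facts σ ρ d hd h hh
  set Mσ := orderOf σ with hMσdef
  set Mρ := orderOf ρ with hMρdef
  have hMσ0 : Mσ ≠ 0 := (orderOf_pos σ).ne'
  have hMρ0 : Mρ ≠ 0 := (orderOf_pos ρ).ne'
  set n := Fintype.card A with hndef
  have hn0 : (n : ℂ) ≠ 0 := Nat.cast_ne_zero.mpr Fintype.card_ne_zero
  have hMσ0' : (Mσ : ℂ) ≠ 0 := Nat.cast_ne_zero.mpr hMσ0
  have hMρ0' : (Mρ : ℂ) ≠ 0 := Nat.cast_ne_zero.mpr hMρ0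
  -- abbreviations
  set cσ : ℕ → ℂ := fun k => (1 - (ee (1/(Mσ:ℝ)) ^ k)⁻¹)⁻¹ with hcσdef
  set cρ : ℕ → ℂ := fun l => (1 - (ee (1/(Mρ:ℝ)) ^ l)⁻¹)⁻¹ with hcρdef
  set Fσ : (A →* ℂˣ) → ℂ := fun χ => ∑ k ∈ Finset.Ico 1 Mσ, ((χ (σ^k) : ℂˣ) : ℂ) * cσ k
    with hFσdef
  set Fρ : (A →* ℂˣ) → ℂ := fun χ => ∑ l ∈ Finset.Ico 1 Mρ, ((χ (ρ^l) : ℂˣ) : ℂ) * cρ l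
    with hFρdef
  -- Step A
  have stepA : ∀ χ : A →* ℂˣ, (uσ χ : ℂ) = ((Mσ:ℂ)-1)/2 - Fσ χ := by
    intro χ
    have hs := sawtooth Mσ (uσ χ) hMσ0 (huσ χ).1
    have hF : Fσ χ = ((Mσ:ℂ)-1)/2 - uσ χ := by
      rw [hFσdef, ← hs]
      refine Finset.sum_congr rfl fun k _ => ?_
      rw [map_pow, Units.val_pow_eq_pow_val, (huσ χ).2, ee_nat_div, ← pow_mul,
        div_eq_mul_inv (ee (1/(Mσ:ℝ)) ^ (uσ χ * k))]
    rw [hF]; ring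
  have stepB : ∀ χ : A →* ℂˣ, (uρ χ : ℂ) = ((Mρ:ℂ)-1)/2 - Fρ χ := by
    intro χ
    have hs := sawtooth Mρ (uρ χ) hMρ0 (huρ χ).1
    have hF : Fρ χ = ((Mρ:ℂ)-1)/2 - uρ χ := by
      rw [hFρdef, ← hs]
      refine Finset.sum_congr rfl fun l _ => ?_
      rw [map_pow, Units.val_pow_eq_pow_val, (huρ χ).2, ee_nat_div, ← pow_mul,
        div_eq_mul_inv (ee (1/(Mρ:ℝ)) ^ (uρ χ * l))]
    rw [hF]; ring
  -- vanishing sums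
  have hzσ : ∀ k ∈ Finset.Ico 1 Mσ, ∑ χ : A →* ℂˣ, ((χ (σ^k) : ℂˣ) : ℂ) = 0 := by
    intro k hk
    obtain ⟨hk1, hk2⟩ := Finset.mem_Ico.mp hk
    rw [orth, if_neg]
    intro hcon
    exact absurd (Nat.le_of_dvd (by omega) (orderOf_dvd_of_pow_eq_one hcon)) (by omega)
  have hzρ : ∀ l ∈ Finset.Ico 1 Mρ, ∑ χ : A →* ℂˣ, ((χ (ρ^l) : ℂˣ) : ℂ) = 0 := by
    intro l hl
    obtain ⟨hl1, hl2⟩ := Finset.mem_Ico.mp hl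
    rw [orth, if_neg]
    intro hcon
    exact absurd (Nat.le_of_dvd (by omega) (orderOf_dvd_of_pow_eq_one hcon)) (by omega)
  have hSσ : ∑ χ : A →* ℂˣ, Fσ χ = 0 := by
    rw [hFσdef, Finset.sum_comm]
    refine Finset.sum_eq_zero fun k hk => ?_
    rw [← Finset.sum_mul, hzσ k hk, zero_mul]
  have hSρ : ∑ χ : A →* ℂˣ, Fρ χ = 0 := by
    rw [hFρdef, Finset.sum_comm]
    refine Finset.sum_eq_zero fun l hl => ?_
    rw [← Finset.sum_mul, hzρ l hl, zero_mul]
  -- product sum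
  have hprod : ∑ χ : A →* ℂˣ, Fσ χ * Fρ χ = (n:ℂ) * phi (h:ℤ) d 0 := by
    have expand2 : ∀ χ : A →* ℂˣ, Fσ χ * Fρ χ
        = ∑ k ∈ Finset.Ico 1 Mσ, ∑ l ∈ Finset.Ico 1 Mρ,
            ((χ (σ^k * ρ^l) : ℂˣ) : ℂ) * (cσ k * cρ l) := by
      intro χ
      rw [hFσdef, hFρdef, Finset.sum_mul_sum]
      refine Finset.sum_congr rfl fun k _ => Finset.sum_congr rfl fun l _ => ?_
      rw [map_mul, Units.val_mul]
      ring
    rw [Finset.sum_congr rfl fun χ _ => expand2 χ, Finset.sum_comm]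
    have hswap : ∀ k ∈ Finset.Ico 1 Mσ,
        ∑ χ : A →* ℂˣ, ∑ l ∈ Finset.Ico 1 Mρ, ((χ (σ^k * ρ^l) : ℂˣ) : ℂ) * (cσ k * cρ l)
          = ∑ l ∈ Finset.Ico 1 Mρ, (if σ^k * ρ^l = 1 then (n:ℂ) else 0) * (cσ k * cρ l) := by
      intro k _
      rw [Finset.sum_comm]
      refine Finset.sum_congr rfl fun l _ => ?_
      rw [← Finset.sum_mul, orth]
    rw [Finset.sum_congr rfl hswap]
    rw [← Finset.sum_product']
    have hite : ∀ p : ℕ × ℕ,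
        (if σ^p.1 * ρ^p.2 = 1 then (n:ℂ) else 0) * (cσ p.1 * cρ p.2)
          = if σ^p.1 * ρ^p.2 = 1 then (n:ℂ) * (cσ p.1 * cρ p.2) else 0 := by
      intro p; split_ifs <;> simp
    calc ∑ p ∈ Finset.Ico 1 Mσ ×ˢ Finset.Ico 1 Mρ,
          (if σ^p.1 * ρ^p.2 = 1 then (n:ℂ) else 0) * (cσ p.1 * cρ p.2)
        = ∑ p ∈ Finset.Ico 1 Mσ ×ˢ Finset.Ico 1 Mρ,
            (if σ^p.1 * ρ^p.2 = 1 then (n:ℂ) * (cσ p.1 * cρ p.2) else 0) :=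
          Finset.sum_congr rfl fun p _ => hite p
      _ = ∑ p ∈ (Finset.Ico 1 Mσ ×ˢ Finset.Ico 1 Mρ).filter
            (fun p => σ^p.1 * ρ^p.2 = 1), (n:ℂ) * (cσ p.1 * cρ p.2) :=
          (Finset.sum_filter _ _).symm
      _ = (n:ℂ) * ∑ p ∈ (Finset.Ico 1 Mσ ×ˢ Finset.Ico 1 Mρ).filter
            (fun p => σ^p.1 * ρ^p.2 = 1), cσ p.1 * cρ p.2 := by
          rw [Finset.mul_sum]
      _ = (n:ℂ) * phi (h:ℤ) d 0 := by
          rw [pairs_sum σ ρ d h hd0 hdσ hdρ hcop hoσ hIeq hh]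
  -- the key identity
  have key : ∑ χ : A →* ℂˣ, (uσ χ : ℂ) * (uρ χ : ℂ)
      = (n:ℂ) * (((Mσ:ℂ)-1) * ((Mρ:ℂ)-1) / 4) + (n:ℂ) * phi (h:ℤ) d 0 := by
    have hexp : ∀ χ : A →* ℂˣ, (uσ χ : ℂ) * (uρ χ : ℂ)
        = ((Mσ:ℂ)-1)/2 * (((Mρ:ℂ)-1)/2) - ((Mσ:ℂ)-1)/2 * Fρ χ - ((Mρ:ℂ)-1)/2 * Fσ χ
          + Fσ χ * Fρ χ := by
      intro χ; rw [stepA χ, stepB χ]; ring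
    rw [Finset.sum_congr rfl fun χ _ => hexp χ]
    rw [Finset.sum_add_distrib, Finset.sum_sub_distrib, Finset.sum_sub_distrib,
      Finset.sum_const, ← Finset.mul_sum, ← Finset.mul_sum, hSσ, hSρ, hprod]
    have hcard : (Finset.univ : Finset (A →* ℂˣ)).card = n := by
      obtain ⟨e⟩ := CommGroup.monoidHom_mulEquiv_of_hasEnoughRootsOfUnity A ℂ
      rw [hndef]
      exact Fintype.card_congr e.toEquiv
    rw [hcard]
    push_cast
    ring
  -- final arithmetic
  rw [← Finset.sum_div, key]
  field_simp
  ring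
end
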